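/- Let S be a type, f : S ≃ S a bijection, K ⊆ S a set with f(K) = K, and B₀, B₁, B₂, B₃ ⊆ S sets with K ⊆ B₀ ∪ B₁ ∪ B₂ ∪ B₃. Assume that for every z ∈ K: (i) z ∉ B₀ ∩ B₁, z ∉ B₀ ∩ B₂, and z ∉ B₁ ∩ B₃; (ii) if z ∈ B₁ then f(z) ∉ B₁ ∪ B₂; (iii) if z ∈ B₃ then f(z) ∉ B₀ ∪ B₃; (iv) if z ∈ B₀ \ B₃ then f(z) ∉ B₁; (v) if z ∈ B₃ \ (B₀ ∪ B₂) then f(z) ∉ B₂; (vi) if z ∈ B₂ \ (B₁ ∪ B₃) then f(z) ∉ B₀ ∪ B₁; (vii) if z ∈ B₁ \ B₂ then f(z) ∉ B₃. Then for every z ∈ K there exists a bi-infinite sequence (i_n)_{n ∈ ℤ} with values in {0,1,2,3} such that (i_n, i_{n+1}) ∈ 𝔗⁺ for all n ∈ ℤ and fⁿ(z) ∈ B_{i_n} for all n ∈ ℤ (where fⁿ denotes the n-th iterate for n ≥ 0 and the |n|-th iterate of the inverse for n < 0). -/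

import Mathlib

/-- Admissible transitions `𝔗⁺` for the 4-box system. -/
def TplusFin : Set (Fin 4 × Fin 4) :=
  {(0, 0), (0, 2), (0, 3), (1, 0), (2, 2), (2, 3), (3, 1)}

namespace BItinAux
open Classical
variable {S : Type*}
def Amb (B : Fin 4 → Set S) (y : S) : Prop :=
  (y ∈ B 1 ∧ y ∈ B 2) ∨ (y ∈ B 0 ∧ y ∈ B 3) ∨ (y ∈ B 2 ∧ y ∈ B 3)
noncomputable def uLab (B : Fin 4 → Set S) (y : S) : Fin 4 :=
  if y ∈ B 0 then 0 else if y ∈ B 1 then 1 else if y ∈ B 2 then 2 else 3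
noncomputable def bstep (B : Fin 4 → Set S) (y : S) (t : Fin 4) : Fin 4 :=
  if y ∈ B 1 then (if t = 0 then 1 else 2)
  else if y ∈ B 0 then (if t = 1 then 3 else 0)
  else (if t = 1 then 3 else 2)
noncomputable def frLab (B : Fin 4 → Set S) (y : S) (n : ℤ) : Fin 4 :=
  if y ∈ B 1 then (if n % 4 = 0 ∨ n % 4 = 1 then 1 else 2)
  else if y ∈ B 0 then (if n % 4 = 1 ∨ n % 4 = 2 then 0 else 3)
  else (if n % 4 = 1 ∨ n % 4 = 2 then 2 else 3)
lemma T00 : ((0,0) : Fin 4 × Fin 4) ∈ TplusFin := by simp [TplusFin]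
lemma T02 : ((0,2) : Fin 4 × Fin 4) ∈ TplusFin := by simp [TplusFin]
lemma T03 : ((0,3) : Fin 4 × Fin 4) ∈ TplusFin := by simp [TplusFin]
lemma T10 : ((1,0) : Fin 4 × Fin 4) ∈ TplusFin := by simp [TplusFin]
lemma T22 : ((2,2) : Fin 4 × Fin 4) ∈ TplusFin := by simp [TplusFin]
lemma T23 : ((2,3) : Fin 4 × Fin 4) ∈ TplusFin := by simp [TplusFin]
lemma T31 : ((3,1) : Fin 4 × Fin 4) ∈ TplusFin := by simp [TplusFin]

variable {B : Fin 4 → Set S} {y w : S}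

lemma uLab_mem (hcov : y ∈ B 0 ∪ B 1 ∪ B 2 ∪ B 3) : y ∈ B (uLab B y) := by
  unfold uLab
  split_ifs with h0 h1 h2
  · exact h0
  · exact h1
  · exact h2
  · rcases hcov with ((h|h)|h)|h
    exacts [absurd h h0, absurd h h1, absurd h h2, h]

lemma amb_class1 (ha : Amb B y) (n01 : ¬(y ∈ B 0 ∧ y ∈ B 1))
    (n13 : ¬(y ∈ B 1 ∧ y ∈ B 3)) (h1 : y ∈ B 1) : y ∈ B 2 := by
  rcases ha with ⟨_,h⟩|⟨h0,_⟩|⟨_,h3⟩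
  exacts [h, absurd ⟨h0,h1⟩ n01, absurd ⟨h1,h3⟩ n13]

lemma amb_class2 (ha : Amb B y) (n02 : ¬(y ∈ B 0 ∧ y ∈ B 2))
    (hn1 : y ∉ B 1) (h0 : y ∈ B 0) : y ∈ B 3 := by
  rcases ha with ⟨h,_⟩|⟨_,h⟩|⟨h2,_⟩
  exacts [absurd h hn1, h, absurd ⟨h0,h2⟩ n02]

lemma amb_class3 (ha : Amb B y) (hn1 : y ∉ B 1) (hn0 : y ∉ B 0) :
    y ∈ B 2 ∧ y ∈ B 3 := by
  rcases ha with ⟨h,_⟩|⟨h,_⟩|h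
  exacts [absurd h hn1, absurd h hn0, h]

lemma bstep_mem (ha : Amb B y) (n01 : ¬(y ∈ B 0 ∧ y ∈ B 1))
    (n02 : ¬(y ∈ B 0 ∧ y ∈ B 2)) (n13 : ¬(y ∈ B 1 ∧ y ∈ B 3)) (t : Fin 4) :
    y ∈ B (bstep B y t) := by
  unfold bstep
  split_ifs with h1 ht h0 ht ht
  · exact h1
  · exact amb_class1 ha n01 n13 h1
  · exact amb_class2 ha n02 h1 h0
  · exact h0
  · exact (amb_class3 ha h1 h0).2
  · exact (amb_class3 ha h1 h0).1

lemma frLab_mem (ha : Amb B y) (n01 : ¬(y ∈ B 0 ∧ y ∈ B 1))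
    (n02 : ¬(y ∈ B 0 ∧ y ∈ B 2)) (n13 : ¬(y ∈ B 1 ∧ y ∈ B 3)) (n : ℤ) :
    y ∈ B (frLab B y n) := by
  unfold frLab
  split_ifs with h1 hn h0 hn hn
  · exact h1
  · exact amb_class1 ha n01 n13 h1
  · exact h0
  · exact amb_class2 ha n02 h1 h0
  · exact (amb_class3 ha h1 h0).1
  · exact (amb_class3 ha h1 h0).2


/-- Transition out of an unambiguous point. -/
lemma trans_uLab
    (hcov : y ∈ B 0 ∪ B 1 ∪ B 2 ∪ B 3)
    (n01 : ¬(y ∈ B 0 ∧ y ∈ B 1)) (n02 : ¬(y ∈ B 0 ∧ y ∈ B 2))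
    (n13 : ¬(y ∈ B 1 ∧ y ∈ B 3))
    (hna : ¬ Amb B y)
    (h0 : y ∈ B 0 → y ∉ B 3 → w ∉ B 1)
    (h1a : y ∈ B 1 → w ∉ B 1 ∧ w ∉ B 2)
    (h1b : y ∈ B 1 → y ∉ B 2 → w ∉ B 3)
    (h2 : y ∈ B 2 → y ∉ B 1 → y ∉ B 3 → w ∉ B 0 ∧ w ∉ B 1)
    (h3a : y ∈ B 3 → w ∉ B 0 ∧ w ∉ B 3)
    (h3b : y ∈ B 3 → y ∉ B 0 → y ∉ B 2 → w ∉ B 2)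
    (t : Fin 4) (hw : w ∈ B t) : (uLab B y, t) ∈ TplusFin := by
  unfold uLab
  split_ifs with hy0 hy1 hy2
  · -- y ∈ B 0, y ∉ B 3 since ¬Amb
    have hy3 : y ∉ B 3 := fun h3 => hna (Or.inr (Or.inl ⟨hy0, h3⟩))
    have hw1 : w ∉ B 1 := h0 hy0 hy3
    fin_cases t
    exacts [T00, absurd hw hw1, T02, T03]
  · have hy2 : y ∉ B 2 := fun h2' => hna (Or.inl ⟨hy1, h2'⟩)
    obtain ⟨hw1, hw2⟩ := h1a hy1
    have hw3 : w ∉ B 3 := h1b hy1 hy2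
    fin_cases t
    exacts [T10, absurd hw hw1, absurd hw hw2, absurd hw hw3]
  · have hy3 : y ∉ B 3 := fun h3 => hna (Or.inr (Or.inr ⟨hy2, h3⟩))
    obtain ⟨hw0, hw1⟩ := h2 hy2 hy1 hy3
    fin_cases t
    exacts [absurd hw hw0, absurd hw hw1, T22, T23]
  · have hy3 : y ∈ B 3 := by
      rcases hcov with ((h|h)|h)|h
      exacts [absurd h hy0, absurd h hy1, absurd h hy2, h]
    obtain ⟨hw0, hw3⟩ := h3a hy3
    have hw2 : w ∉ B 2 := h3b hy3 hy0 hy2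
    fin_cases t
    exacts [absurd hw hw0, T31, absurd hw hw2, absurd hw hw3]

/-- Transition out of an ambiguous point with a finite ambiguity horizon. -/
lemma trans_bstep
    (ha : Amb B y)
    (n01 : ¬(y ∈ B 0 ∧ y ∈ B 1)) (n02 : ¬(y ∈ B 0 ∧ y ∈ B 2))
    (n13 : ¬(y ∈ B 1 ∧ y ∈ B 3))
    (h1a : y ∈ B 1 → w ∉ B 1 ∧ w ∉ B 2)
    (h3a : y ∈ B 3 → w ∉ B 0 ∧ w ∉ B 3)
    (t : Fin 4) (hw : w ∈ B t) : (bstep B y t, t) ∈ TplusFin := by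
  unfold bstep
  split_ifs with hy1 ht hy0 ht ht
  · -- y ∈ B 1, t = 0
    subst ht; exact T10
  · -- y ∈ B 1, t ≠ 0: w ∉ B 1, B 2 so t = 3
    obtain ⟨hw1, hw2⟩ := h1a hy1
    fin_cases t
    exacts [absurd rfl ht, absurd hw hw1, absurd hw hw2, T23]
  · -- y ∈ B 0 ∧ B 3 class, t = 1
    subst ht; exact T31
  · -- t ≠ 1 : w ∉ B 0, B 3 so t = 2
    have hy3 : y ∈ B 3 := amb_class2 ha n02 hy1 hy0
    obtain ⟨hw0, hw3⟩ := h3a hy3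
    fin_cases t
    exacts [absurd hw hw0, absurd rfl ht, T02, absurd hw hw3]
  · subst ht; exact T31
  · have hy3 : y ∈ B 3 := (amb_class3 ha hy1 hy0).2
    obtain ⟨hw0, hw3⟩ := h3a hy3
    fin_cases t
    exacts [absurd hw hw0, absurd rfl ht, T22, absurd hw hw3]

/-- Transition inside a forever-ambiguous stretch. -/
lemma trans_fr (n : ℤ)
    (ha : Amb B y) (haw : Amb B w)
    (n01 : ¬(y ∈ B 0 ∧ y ∈ B 1)) (n02 : ¬(y ∈ B 0 ∧ y ∈ B 2))
    (n13 : ¬(y ∈ B 1 ∧ y ∈ B 3))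
    (h1a : y ∈ B 1 → w ∉ B 1 ∧ w ∉ B 2)
    (h3a : y ∈ B 3 → w ∉ B 0 ∧ w ∉ B 3) :
    (frLab B y n, frLab B w (n+1)) ∈ TplusFin := by
  have hmod : n % 4 = 0 ∨ n % 4 = 1 ∨ n % 4 = 2 ∨ n % 4 = 3 := by omega
  by_cases hy1 : y ∈ B 1
  · -- class {1,2}; w is in class {0,3}
    obtain ⟨hw1, hw2⟩ := h1a hy1
    have hw03 : w ∈ B 0 ∧ w ∈ B 3 := by
      rcases haw with ⟨h,_⟩|h|⟨h,_⟩
      exacts [absurd h hw1, h, absurd h hw2]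
    rw [frLab, if_pos hy1, frLab, if_neg hw1, if_pos hw03.1]
    by_cases hc : n % 4 = 0 ∨ n % 4 = 1
    · rw [if_pos hc, if_pos (by omega : (n+1) % 4 = 1 ∨ (n+1) % 4 = 2)]
      exact T10
    · rw [if_neg hc, if_neg (by omega : ¬((n+1) % 4 = 1 ∨ (n+1) % 4 = 2))]
      exact T23
  · -- y contains 3 (class {0,3} or {2,3}); w is in class {1,2}
    have hy3 : y ∈ B 3 := by
      by_cases hy0 : y ∈ B 0
      · exact amb_class2 ha n02 hy1 hy0
      · exact (amb_class3 ha hy1 hy0).2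
    obtain ⟨hw0, hw3⟩ := h3a hy3
    have hw12 : w ∈ B 1 ∧ w ∈ B 2 := by
      rcases haw with h|⟨h,_⟩|⟨_,h⟩
      exacts [h, absurd h hw0, absurd h hw3]
    rw [frLab, if_neg hy1, frLab, if_pos hw12.1]
    by_cases hy0 : y ∈ B 0
    · rw [if_pos hy0]
      by_cases hc : n % 4 = 1 ∨ n % 4 = 2
      · rw [if_pos hc, if_neg (by omega : ¬((n+1) % 4 = 0 ∨ (n+1) % 4 = 1))]
        exact T02
      · rw [if_neg hc, if_pos (by omega : (n+1) % 4 = 0 ∨ (n+1) % 4 = 1)]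
        exact T31
    · rw [if_neg hy0]
      by_cases hc : n % 4 = 1 ∨ n % 4 = 2
      · rw [if_pos hc, if_neg (by omega : ¬((n+1) % 4 = 0 ∨ (n+1) % 4 = 1))]
        exact T22
      · rw [if_neg hc, if_pos (by omega : (n+1) % 4 = 0 ∨ (n+1) % 4 = 1)]
        exact T31


noncomputable def backLab (B : Fin 4 → Set S) (g : ℤ → S) : ℕ → ℤ → Fin 4
  | 0, n => uLab B (g n)
  | (k+1), n => if Amb B (g n) then bstep B (g n) (backLab B g k (n+1)) else uLab B (g n)

noncomputable def itin (B : Fin 4 → Set S) (g : ℤ → S) (n : ℤ) : Fin 4 :=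
  if h : ∃ k : ℕ, ¬ Amb B (g (n + (k:ℤ))) then backLab B g (Nat.find h) n
  else frLab B (g n) n

lemma find_shift (g : ℤ → S) (n : ℤ)
    (h : ∃ k : ℕ, ¬ Amb B (g (n + (k:ℤ)))) (ha : Amb B (g n)) :
    ∃ h' : ∃ k : ℕ, ¬ Amb B (g (n + 1 + (k:ℤ))), Nat.find h = Nat.find h' + 1 := by
  have hspec : ¬ Amb B (g (n + ((Nat.find h : ℕ) : ℤ))) := Nat.find_spec h
  have hnz : Nat.find h ≠ 0 := by
    intro h0
    rw [h0] at hspec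
    simp only [Nat.cast_zero, add_zero] at hspec
    exact hspec ha
  obtain ⟨j, hj⟩ : ∃ j, Nat.find h = j + 1 := ⟨Nat.find h - 1, by omega⟩
  have hjm : ¬ Amb B (g (n + 1 + (j:ℤ))) := by
    have e : n + 1 + (j:ℤ) = n + ((j+1 : ℕ):ℤ) := by push_cast; ring
    rw [e, ← hj]; exact hspec
  have h' : ∃ k : ℕ, ¬ Amb B (g (n + 1 + (k:ℤ))) := ⟨j, hjm⟩
  refine ⟨h', ?_⟩
  have hfj : Nat.find h' = j := by
    rw [Nat.find_eq_iff]
    refine ⟨hjm, ?_⟩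
    intro i hi
    rw [not_not]
    have hmin := Nat.find_min h (m := i + 1) (by omega)
    rw [not_not] at hmin
    have e : n + ((i+1 : ℕ):ℤ) = n + 1 + (i:ℤ) := by push_cast; ring
    rwa [e] at hmin
  omega

end BItinAux


open BItinAux in
theorem biinfinite_itinerary_plus {S : Type*} (f : Equiv.Perm S) (K : Set S)
    (B : Fin 4 → Set S)
    (hK : (⇑f) '' K = K)
    (hcov : K ⊆ B 0 ∪ B 1 ∪ B 2 ∪ B 3)
    (hi : ∀ z ∈ K, z ∉ B 0 ∩ B 1 ∧ z ∉ B 0 ∩ B 2 ∧ z ∉ B 1 ∩ B 3)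
    (hii : ∀ z ∈ K, z ∈ B 1 → f z ∉ B 1 ∪ B 2)
    (hiii : ∀ z ∈ K, z ∈ B 3 → f z ∉ B 0 ∪ B 3)
    (hiv : ∀ z ∈ K, z ∈ B 0 \ B 3 → f z ∉ B 1)
    (hv : ∀ z ∈ K, z ∈ B 3 \ (B 0 ∪ B 2) → f z ∉ B 2)
    (hvi : ∀ z ∈ K, z ∈ B 2 \ (B 1 ∪ B 3) → f z ∉ B 0 ∪ B 1)
    (hvii : ∀ z ∈ K, z ∈ B 1 \ B 2 → f z ∉ B 3) :
    ∀ z ∈ K, ∃ i : ℤ → Fin 4,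
      (∀ n : ℤ, (i n, i (n + 1)) ∈ TplusFin) ∧
      (∀ n : ℤ, (f ^ n) z ∈ B (i n)) := by
  classical
  intro z hz
  set g : ℤ → S := fun n => (f ^ n) z with hgdef
  have gstep : ∀ n : ℤ, g (n + 1) = f (g n) := by
    intro n
    have hpow : f ^ (n + 1) = f * f ^ n := by rw [add_comm, zpow_add, zpow_one]
    simp only [hgdef, hpow, Equiv.Perm.mul_apply]
  have hfK : ∀ y ∈ K, f y ∈ K := by
    intro y hy; rw [← hK]; exact ⟨y, hy, rfl⟩
  have hbK : ∀ y, f y ∈ K → y ∈ K := by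
    intro y hy
    rw [← hK] at hy
    obtain ⟨x, hx, hxy⟩ := hy
    rwa [← f.injective hxy]
  have gK : ∀ n : ℤ, g n ∈ K := by
    intro n
    induction n using Int.induction_on with
    | zero => simpa [hgdef] using hz
    | succ k ih => rw [gstep]; exact hfK _ ih
    | pred k ih =>
        apply hbK
        have e1 : (-(k:ℤ) - 1) + 1 = -(k:ℤ) := by ring
        have e2 : (-(k:ℤ) - 1) = -((k:ℤ) + 1) := by ring
        have := gstep (-(k:ℤ) - 1)
        rw [e1] at this
        rw [← this]
        exact ih
  have hexcl : ∀ n : ℤ, ¬(g n ∈ B 0 ∧ g n ∈ B 1) ∧ ¬(g n ∈ B 0 ∧ g n ∈ B 2)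
      ∧ ¬(g n ∈ B 1 ∧ g n ∈ B 3) := by
    intro n
    have := hi _ (gK n)
    simpa [Set.mem_inter_iff] using this
  have H1a : ∀ n : ℤ, g n ∈ B 1 → g (n+1) ∉ B 1 ∧ g (n+1) ∉ B 2 := by
    intro n h1
    have := hii _ (gK n) h1
    rw [← gstep] at this
    simpa [Set.mem_union, not_or] using this
  have H3a : ∀ n : ℤ, g n ∈ B 3 → g (n+1) ∉ B 0 ∧ g (n+1) ∉ B 3 := by
    intro n h3
    have := hiii _ (gK n) h3
    rw [← gstep] at this
    simpa [Set.mem_union, not_or] using this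
  have H0 : ∀ n : ℤ, g n ∈ B 0 → g n ∉ B 3 → g (n+1) ∉ B 1 := by
    intro n h0 h3
    have := hiv _ (gK n) ⟨h0, h3⟩
    rwa [← gstep] at this
  have H1b : ∀ n : ℤ, g n ∈ B 1 → g n ∉ B 2 → g (n+1) ∉ B 3 := by
    intro n h1 h2
    have := hvii _ (gK n) ⟨h1, h2⟩
    rwa [← gstep] at this
  have H2 : ∀ n : ℤ, g n ∈ B 2 → g n ∉ B 1 → g n ∉ B 3 →
      g (n+1) ∉ B 0 ∧ g (n+1) ∉ B 1 := by
    intro n h2 h1 h3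
    have := hvi _ (gK n) ⟨h2, by simp [Set.mem_union, h1, h3]⟩
    rw [← gstep] at this
    simpa [Set.mem_union, not_or] using this
  have H3b : ∀ n : ℤ, g n ∈ B 3 → g n ∉ B 0 → g n ∉ B 2 → g (n+1) ∉ B 2 := by
    intro n h3 h0 h2
    have := hv _ (gK n) ⟨h3, by simp [Set.mem_union, h0, h2]⟩
    rwa [← gstep] at this
  -- membership
  have hmem : ∀ n : ℤ, g n ∈ B (itin B g n) := by
    intro n
    by_cases h : ∃ k : ℕ, ¬ Amb B (g (n + (k:ℤ)))
    · rw [itin, dif_pos h]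
      rcases Nat.eq_zero_or_pos (Nat.find h) with h0 | hpos
      · rw [h0]
        exact uLab_mem (hcov (gK n))
      · obtain ⟨j, hj⟩ : ∃ j, Nat.find h = j + 1 := ⟨Nat.find h - 1, by omega⟩
        rw [hj]
        by_cases ha : Amb B (g n)
        · simp only [backLab]
          rw [if_pos ha]
          exact bstep_mem ha (hexcl n).1 (hexcl n).2.1 (hexcl n).2.2 _
        · simp only [backLab]
          rw [if_neg ha]
          exact uLab_mem (hcov (gK n))
    · rw [itin, dif_neg h]
      push_neg at h
      have ha : Amb B (g n) := by simpa using h 0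
      exact frLab_mem ha (hexcl n).1 (hexcl n).2.1 (hexcl n).2.2 n
  -- transitions
  have htrans : ∀ n : ℤ, (itin B g n, itin B g (n+1)) ∈ TplusFin := by
    intro n
    by_cases h : ∃ k : ℕ, ¬ Amb B (g (n + (k:ℤ)))
    · by_cases ha : Amb B (g n)
      · obtain ⟨h', hfh⟩ := find_shift g n h ha
        have e1 : itin B g n = bstep B (g n) (itin B g (n+1)) := by
          rw [itin, dif_pos h, hfh]
          simp only [backLab]
          rw [if_pos ha, itin, dif_pos h']
        rw [e1]
        exact trans_bstep ha (hexcl n).1 (hexcl n).2.1 (hexcl n).2.2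
          (H1a n) (H3a n) _ (hmem (n+1))
      · have hf0 : Nat.find h = 0 := (Nat.find_eq_zero h).mpr (by simpa using ha)
        have e1 : itin B g n = uLab B (g n) := by
          rw [itin, dif_pos h, hf0]
          simp only [backLab]
        rw [e1]
        exact trans_uLab (hcov (gK n)) (hexcl n).1 (hexcl n).2.1 (hexcl n).2.2
          ha (H0 n) (H1a n) (H1b n) (H2 n) (H3a n) (H3b n) _ (hmem (n+1))
    · have h' : ¬ ∃ k : ℕ, ¬ Amb B (g (n + 1 + (k:ℤ))) := by
        push_neg at h ⊢
        intro k
        have := h (k+1)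
        have e : n + ((k+1 : ℕ):ℤ) = n + 1 + (k:ℤ) := by push_cast; ring
        rwa [e] at this
      have ha : Amb B (g n) := by
        push_neg at h; simpa using h 0
      have haw : Amb B (g (n+1)) := by
        push_neg at h
        have := h 1
        have e : n + ((1:ℕ):ℤ) = n + 1 := by norm_num
        rwa [e] at this
      rw [itin, dif_neg h, itin, dif_neg h']
      exact trans_fr n ha haw (hexcl n).1 (hexcl n).2.1 (hexcl n).2.2
        (H1a n) (H3a n)
  exact ⟨itin B g, htrans, fun n => hmem n⟩
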